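/- Under the same hypotheses, the quadratic form of H_{Ω,φ} at P_{V_N}f satisfies ⟨H_{Ω,φ}P_{V_N}f, P_{V_N}f⟩ = Σ_{k=1}^N α_k|⟨f,ψ_k⟩|² ≥ γ(1 − ε/(1−γ))‖f‖₂². -/

import Mathlib

open scoped ComplexInnerProductSpace

theorem stmt2_part1
    {H : Type*} [NormedAddCommGroup H] [InnerProductSpace ℂ H]
    (ψ : ℕ → H) (hψ : Orthonormal ℂ ψ)
    (α : ℕ → ℝ)
    (T : H →L[ℂ] H)
    (heig : ∀ k, T (ψ k) = (α k : ℂ) • ψ k)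
    (f : H) (N : ℕ) :
    ⟪∑ k ∈ Finset.range N, ⟪ψ k, f⟫ • ψ k,
        T (∑ k ∈ Finset.range N, ⟪ψ k, f⟫ • ψ k)⟫
      = ((∑ k ∈ Finset.range N, α k * ‖⟪ψ k, f⟫‖ ^ 2 : ℝ) : ℂ) := by
  rw [map_sum]
  simp only [map_smul, heig, smul_smul]
  rw [inner_sum]
  push_cast
  refine Finset.sum_congr rfl fun j hj => ?_
  rw [inner_smul_right, sum_inner, Finset.sum_eq_single j]
  · have h1 : ⟪ψ j, ψ j⟫ = (1 : ℂ) := by simpa using orthonormal_iff_ite.mp hψ j j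
    rw [inner_smul_left, h1, mul_one, mul_comm (⟪ψ j, f⟫) ((α j : ℂ)), mul_assoc,
      RCLike.mul_conj]
    norm_cast
    try rfl
    try norm_num
    try simp
  · intro b _ hbj
    rw [inner_smul_left, hψ.2 hbj, mul_zero]
  · intro h; exact absurd hj h

theorem stmt2_part2
    {H : Type*} [NormedAddCommGroup H] [InnerProductSpace ℂ H]
    (ψ : ℕ → H) (hψ : Orthonormal ℂ ψ)
    (α : ℕ → ℝ) (hmono : Antitone α) (hα : ∀ k, 0 < α k ∧ α k ≤ 1)
    (f : H)
    (ε γ : ℝ) (hγ0 : 0 ≤ γ) (hγ1 : γ < 1)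
    (N : ℕ) (hγle : ∀ k < N, γ ≤ α k) (hαN : α N ≤ γ)
    (hconc : (1 - ε) * ‖f‖ ^ 2 ≤ ∑' k, α k * ‖⟪ψ k, f⟫‖ ^ 2) :
    γ * (1 - ε / (1 - γ)) * ‖f‖ ^ 2
      ≤ ∑ k ∈ Finset.range N, α k * ‖⟪ψ k, f⟫‖ ^ 2 := by
  set c : ℕ → ℝ := fun k => ‖⟪ψ k, f⟫‖ ^ 2 with hcdef
  have hcnn : ∀ k, 0 ≤ c k := fun k => by positivity
  have hsumc : Summable c := hψ.inner_products_summable f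
  have hbessel : ∑' k, c k ≤ ‖f‖ ^ 2 := hψ.tsum_inner_products_le f
  have hsumac : Summable (fun k => α k * c k) :=
    Summable.of_nonneg_of_le (fun k => mul_nonneg (hα k).1.le (hcnn k))
      (fun k => mul_le_of_le_one_left (hcnn k) (hα k).2) hsumc
  have hsplit := (Summable.sum_add_tsum_nat_add N hsumac).symm
  have hsplitc := (Summable.sum_add_tsum_nat_add N hsumc).symm
  set A := ∑ k ∈ Finset.range N, α k * c k with hA
  set S := ∑ k ∈ Finset.range N, c k with hS
  have htail : ∑' i, α (i + N) * c (i + N) ≤ γ * ∑' i, c (i + N) := by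
    rw [← tsum_mul_left]
    refine Summable.tsum_le_tsum (fun i => ?_) (hsumac.comp_injective (add_left_injective N))
      ((hsumc.comp_injective (add_left_injective N)).mul_left γ)
    exact mul_le_mul_of_nonneg_right ((hmono (Nat.le_add_left N i)).trans hαN) (hcnn _)
  have htailc : ∑' i, c (i + N) ≤ ‖f‖ ^ 2 - S := by
    have := Summable.sum_add_tsum_nat_add N hsumc
    linarith [hbessel]
  have h1 : (1 - ε) * ‖f‖ ^ 2 ≤ A + γ * (‖f‖ ^ 2 - S) := by
    have h2 : γ * ∑' i, c (i + N) ≤ γ * (‖f‖ ^ 2 - S) :=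
      mul_le_mul_of_nonneg_left htailc hγ0
    rw [hsplit] at hconc
    linarith
  have hAS : A ≤ S :=
    Finset.sum_le_sum fun k _ => mul_le_of_le_one_left (hcnn k) (hα k).2
  have hgA : γ * S ≤ A := by
    rw [hS, Finset.mul_sum]
    exact Finset.sum_le_sum fun k hk =>
      mul_le_mul_of_nonneg_right (hγle k (Finset.mem_range.mp hk)) (hcnn k)
  have h1γ : (0:ℝ) < 1 - γ := by linarith
  have hSlb : (1 - ε / (1 - γ)) * ‖f‖ ^ 2 ≤ S := by
    rw [← mul_le_mul_iff_right₀ h1γ]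
    have hdiv : ε / (1 - γ) * (1 - γ) = ε := div_mul_cancel₀ ε h1γ.ne'
    nlinarith [h1, hAS]
  calc γ * (1 - ε / (1 - γ)) * ‖f‖ ^ 2 = γ * ((1 - ε / (1 - γ)) * ‖f‖ ^ 2) := by ring
    _ ≤ γ * S := mul_le_mul_of_nonneg_left hSlb hγ0
    _ ≤ A := hgA

/-- Under the same hypotheses, the quadratic form of the localization operator `T`
at `P_{V_N}f` equals `∑_{k<N} α_k |⟨f,ψ_k⟩|²` and is bounded below by
`γ (1 - ε/(1-γ)) ‖f‖²`. -/
theorem stmt2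
    {H : Type*} [NormedAddCommGroup H] [InnerProductSpace ℂ H] [CompleteSpace H]
    (ψ : ℕ → H) (hψ : Orthonormal ℂ ψ)
    (α : ℕ → ℝ) (hmono : Antitone α) (hα : ∀ k, 0 < α k ∧ α k ≤ 1)
    (T : H →L[ℂ] H) (hsa : IsSelfAdjoint T)
    (heig : ∀ k, T (ψ k) = (α k : ℂ) • ψ k)
    (f : H)
    (ε γ : ℝ) (hε : 0 ≤ ε) (hγ0 : 0 ≤ γ) (hγ1 : γ < 1)
    (N : ℕ) (hγle : ∀ k < N, γ ≤ α k) (hαN : α N ≤ γ)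
    (hconc : (1 - ε) * ‖f‖ ^ 2 ≤ ∑' k, α k * ‖⟪ψ k, f⟫‖ ^ 2) :
    ⟪∑ k ∈ Finset.range N, ⟪ψ k, f⟫ • ψ k,
        T (∑ k ∈ Finset.range N, ⟪ψ k, f⟫ • ψ k)⟫
      = ((∑ k ∈ Finset.range N, α k * ‖⟪ψ k, f⟫‖ ^ 2 : ℝ) : ℂ) ∧
    γ * (1 - ε / (1 - γ)) * ‖f‖ ^ 2
      ≤ ∑ k ∈ Finset.range N, α k * ‖⟪ψ k, f⟫‖ ^ 2 := by
  exact ⟨stmt2_part1 ψ hψ α T heig f N,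
    stmt2_part2 ψ hψ α hmono hα f ε γ hγ0 hγ1 N hγle hαN hconc⟩
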